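/- Let d ≥ 1, β > 0, β* > 0, κ > 0, and let Δ ∈ ℝ^d satisfy β·‖Δ‖₂² ≤ κ². Let ε ∼ N(0, 1/β*) (real) and x ∼ N(0, I_d) be independent, and let v ∈ ℝ^d with ‖v‖₂ = 1. Then | E[ √(β/(2π)) · exp(−(β/2)(ε − ⟨Δ, x⟩)²) · ε · ⟨x, v⟩ ] | ≤ √(κ²/(2π)) · (β/(β+β*)) · (1/g̃), where g̃ = √((β+β*)/β*) · (1 + (β·β*/(β+β*))·‖Δ‖₂²)^{3/2}. -/

import Mathlib

open Real MeasureTheory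

open scoped RealInnerProductSpace

open Real MeasureTheory

private lemma gauss_lin (b : ℝ) : ∫ x : ℝ, x * Real.exp (-b * x ^ 2) = 0 := by
  have h := MeasureTheory.integral_neg_eq_self (fun x : ℝ => x * Real.exp (-b * x ^ 2))
    (volume : Measure ℝ)
  simp only [neg_sq, neg_mul] at h
  have h2 : ∫ x : ℝ, -(x * Real.exp (-b * x ^ 2)) = ∫ x : ℝ, x * Real.exp (-b * x ^ 2) := by
    simpa using h
  rw [integral_neg] at h2
  linarith

private lemma gauss_sq {b : ℝ} (hb : 0 < b) :
    ∫ x : ℝ, x ^ 2 * Real.exp (-b * x ^ 2) = Real.sqrt (π / b) / (2 * b) := by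
  have h1 : ∫ x in Set.Ioi (0:ℝ), x ^ 2 * Real.exp (-x ^ 2) = Real.sqrt π / 4 := by
    have h2 := integral_comp_rpow_Ioi_of_pos
      (g := fun y : ℝ => Real.exp (-y) * y ^ ((1:ℝ)/2)) (p := 2) zero_lt_two
    have h3 : ∫ x in Set.Ioi (0:ℝ),
        ((2:ℝ) * x ^ ((2:ℝ) - 1)) • (Real.exp (-(x ^ (2:ℝ))) * (x ^ (2:ℝ)) ^ ((1:ℝ)/2))
        = ∫ x in Set.Ioi (0:ℝ), 2 * (x ^ 2 * Real.exp (-x ^ 2)) := by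
      refine setIntegral_congr_fun measurableSet_Ioi (fun x hx => ?_)
      have hx0 : (0:ℝ) < x := hx
      have e1 : x ^ ((2:ℝ)) = x ^ (2:ℕ) := by
        rw [← Real.rpow_natCast x 2]; norm_num
      have e2 : x ^ ((2:ℝ) - 1) = x := by norm_num
      have e3 : (x ^ ((2:ℝ))) ^ ((1:ℝ)/2) = x := by
        rw [← Real.rpow_mul hx0.le]; norm_num
      rw [smul_eq_mul, e2, e3, e1]; ring
    rw [h3] at h2
    rw [MeasureTheory.integral_const_mul] at h2
    have h4 : ∫ y in Set.Ioi (0:ℝ), Real.exp (-y) * y ^ ((1:ℝ)/2) = Real.sqrt π / 2 := by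
      have hg : Real.Gamma (3/2) = ∫ y in Set.Ioi (0:ℝ), Real.exp (-y) * y ^ ((3:ℝ)/2 - 1) :=
        Real.Gamma_eq_integral (by norm_num)
      have hg2 : Real.Gamma (3/2) = Real.sqrt π / 2 := by
        have h32 : (3/2 : ℝ) = 1/2 + 1 := by norm_num
        rw [h32, Real.Gamma_add_one (by norm_num), Real.Gamma_one_half_eq]
        ring
      rw [← hg2, hg]
      norm_num
    rw [h4] at h2
    linarith
  have h5 : ∫ x : ℝ, x ^ 2 * Real.exp (-x ^ 2) = Real.sqrt π / 2 := by
    have := integral_comp_abs (f := fun t : ℝ => t ^ 2 * Real.exp (-t ^ 2))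
    simp only [sq_abs] at this
    rw [this, h1]; ring
  have hsb : (0:ℝ) < Real.sqrt b := Real.sqrt_pos.mpr hb
  have h6 := MeasureTheory.Measure.integral_comp_mul_left
    (g := fun y : ℝ => y ^ 2 * Real.exp (-y ^ 2)) (Real.sqrt b)
  have h7 : ∀ x : ℝ, (Real.sqrt b * x) ^ 2 * Real.exp (-(Real.sqrt b * x) ^ 2)
      = b * (x ^ 2 * Real.exp (-b * x ^ 2)) := by
    intro x
    have hbx : (Real.sqrt b * x) ^ 2 = b * x ^ 2 := by
      rw [mul_pow, Real.sq_sqrt hb.le]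
    rw [hbx]; ring
  simp only [h7] at h6
  rw [MeasureTheory.integral_const_mul, h5, smul_eq_mul, abs_of_pos (inv_pos.mpr hsb)] at h6
  have hπb : Real.sqrt (π / b) = Real.sqrt π / Real.sqrt b := Real.sqrt_div pi_pos.le b
  have h8 : ∫ x : ℝ, x ^ 2 * Real.exp (-b * x ^ 2) = (Real.sqrt b)⁻¹ * (Real.sqrt π / 2) / b := by
    rw [← h6]; field_simp
    congr 1; funext x; ring_nf
  rw [h8, hπb]
  rw [div_div, eq_div_iff (by positivity), div_mul_eq_mul_div, div_eq_iff (by positivity)]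
  rw [show (Real.sqrt b)⁻¹ * (Real.sqrt π / 2) * (Real.sqrt b * (2 * b))
      = (Real.sqrt b * (Real.sqrt b)⁻¹) * (Real.sqrt π * b) by ring,
    mul_inv_cancel₀ hsb.ne', one_mul]

private lemma gauss_shift {B : ℝ} (hB : 0 < B) (m : ℝ) :
    ∫ ε : ℝ, ε * Real.exp (-(B/2) * (ε - m) ^ 2) = m * Real.sqrt (2 * π / B) := by
  have h := MeasureTheory.integral_add_right_eq_self (μ := volume)
    (fun ε : ℝ => ε * Real.exp (-(B/2) * (ε - m) ^ 2)) m
  rw [← h]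
  have hpt : ∀ x : ℝ, (x + m) * Real.exp (-(B/2) * (x + m - m) ^ 2)
      = x * Real.exp (-(B/2) * x ^ 2) + m * Real.exp (-(B/2) * x ^ 2) := by
    intro x; rw [add_sub_cancel_right]; ring
  simp_rw [hpt]
  rw [integral_add (integrable_mul_exp_neg_mul_sq (by positivity))
    ((integrable_exp_neg_mul_sq (by positivity)).const_mul m),
    gauss_lin, MeasureTheory.integral_const_mul, integral_gaussian, zero_add]
  congr 2
  rw [div_div_eq_mul_div, mul_comm π 2]

open scoped RealInnerProductSpace



private lemma wzero_le_one {d : ℕ} (w : EuclideanSpace ℝ (Fin d)) [NeZero d] (hw : ‖w‖ = 1) :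
    |w 0| ≤ 1 := by
  have h1 : |w 0| = Real.sqrt ((w 0) ^ 2) := (Real.sqrt_sq_eq_abs _).symm
  have h2 : (w 0) ^ 2 ≤ ∑ i : Fin d, ‖w i‖ ^ 2 := by
    have := Finset.single_le_sum (f := fun i : Fin d => ‖w i‖ ^ 2)
      (fun i _ => by positivity) (Finset.mem_univ 0)
    simpa [Real.norm_eq_abs, sq_abs] using this
  calc |w 0| = Real.sqrt ((w 0) ^ 2) := h1
    _ ≤ Real.sqrt (∑ i : Fin d, ‖w i‖ ^ 2) := Real.sqrt_le_sqrt h2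
    _ = ‖w‖ := (EuclideanSpace.norm_eq w).symm
    _ = 1 := hw



private lemma outer_key {d : ℕ} (hd : 1 ≤ d) {c : ℝ} (hc : 0 ≤ c)
    (Δ v : EuclideanSpace ℝ (Fin d)) (hv : ‖v‖ = 1) :
    |∫ x : EuclideanSpace ℝ (Fin d),
        Real.exp (-‖x‖ ^ 2 / 2) * (⟪Δ, x⟫ * ⟪x, v⟫ * Real.exp (-(c/2) * ⟪Δ, x⟫ ^ 2))|
      ≤ ‖Δ‖ * Real.sqrt (2 * π) ^ d / (1 + c * ‖Δ‖ ^ 2) ^ ((3:ℝ)/2) := by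
  haveI : NeZero d := ⟨by omega⟩
  have h1lam : (0:ℝ) < 1 + c * ‖Δ‖ ^ 2 := by positivity
  rcases eq_or_ne Δ 0 with h0 | h0
  · rw [h0]
    simp only [inner_zero_left, zero_mul, mul_zero, zero_mul, integral_zero, abs_zero, norm_zero]
    positivity
  have hΔn : (0:ℝ) < ‖Δ‖ := norm_pos_iff.mpr h0
  set u : EuclideanSpace ℝ (Fin d) := ‖Δ‖⁻¹ • Δ with hu_def
  have hu : ‖u‖ = 1 := by
    rw [hu_def, norm_smul, norm_inv, norm_norm, inv_mul_cancel₀ hΔn.ne']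
  have horth : Orthonormal ℝ (({0} : Set (Fin d)).restrict fun _ : Fin d => u) := by
    rw [orthonormal_iff_ite]
    intro i j
    have hij : i = j := Subtype.ext ((Set.mem_singleton_iff.mp i.2).trans
      (Set.mem_singleton_iff.mp j.2).symm)
    rw [if_pos hij]
    show (inner ℝ u u : ℝ) = 1
    rw [real_inner_self_eq_norm_sq, hu]
    norm_num
  obtain ⟨b, hb⟩ := horth.exists_orthonormalBasis_extension_of_card_eq
    (by simp [finrank_euclideanSpace_fin])
  have hb0 : b 0 = u := hb 0 rfl
  set lam : ℝ := c * ‖Δ‖ ^ 2 with hlam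
  set w : EuclideanSpace ℝ (Fin d) := b.repr v with hw
  set h : Fin d → Fin d → ℝ → ℝ := fun i j t =>
    (if j = 0 then ‖Δ‖ * t * Real.exp (-(c/2) * (‖Δ‖ * t) ^ 2) else 1) *
    ((if j = i then t else 1) * Real.exp (-t ^ 2 / 2)) with hdef
  -- pointwise identity
  have hpt : ∀ x : EuclideanSpace ℝ (Fin d),
      Real.exp (-‖x‖ ^ 2 / 2) * (⟪Δ, x⟫ * ⟪x, v⟫ * Real.exp (-(c/2) * ⟪Δ, x⟫ ^ 2))
      = ∑ i : Fin d, w i * ∏ j : Fin d, h i j (b.repr x j) := by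
    intro x
    have hΔu : Δ = ‖Δ‖ • u := by
      rw [hu_def, smul_smul, mul_inv_cancel₀ hΔn.ne', one_smul]
    have hyinner : ⟪Δ, x⟫ = ‖Δ‖ * b.repr x 0 := by
      rw [OrthonormalBasis.repr_apply_apply, hb0]
      conv_lhs => rw [hΔu]
      rw [real_inner_smul_left]
    have hxv : ⟪x, v⟫ = ∑ j : Fin d, b.repr x j * w j := by
      rw [hw, ← LinearIsometryEquiv.inner_map_map b.repr x v, PiLp.inner_apply]
      refine Finset.sum_congr rfl fun j _ => ?_
      simp [RCLike.inner_apply]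
      ring
    have hnorm : ‖x‖ ^ 2 = ∑ j : Fin d, (b.repr x j) ^ 2 := by
      rw [← LinearIsometryEquiv.norm_map b.repr x, EuclideanSpace.norm_eq,
        Real.sq_sqrt (by positivity)]
      simp [Real.norm_eq_abs, sq_abs]
    have hexp : Real.exp (-‖x‖ ^ 2 / 2) = ∏ j : Fin d, Real.exp (-(b.repr x j) ^ 2 / 2) := by
      rw [← Real.exp_sum]
      congr 1
      rw [hnorm, neg_div, Finset.sum_div]
      simp [neg_div]
    have hprod : ∀ i : Fin d, (∏ j : Fin d, h i j (b.repr x j))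
        = (‖Δ‖ * b.repr x 0 * Real.exp (-(c/2) * (‖Δ‖ * b.repr x 0) ^ 2)) * ((b.repr x i) *
          ∏ j : Fin d, Real.exp (-(b.repr x j) ^ 2 / 2)) := by
      intro i
      rw [hdef]
      simp only
      rw [Finset.prod_mul_distrib, Finset.prod_mul_distrib]
      congr 1
      · rw [Finset.prod_ite_eq' Finset.univ (0 : Fin d)
          (fun j => ‖Δ‖ * b.repr x j * Real.exp (-(c/2) * (‖Δ‖ * b.repr x j) ^ 2))]
        simp
      · congr 1
        rw [Finset.prod_ite_eq' Finset.univ i (fun j => b.repr x j)]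
        simp
    rw [hyinner, hxv, hexp]
    have gen : ∀ (A P Q : ℝ) (f g : Fin d → ℝ),
        A * (P * (∑ j : Fin d, f j * g j) * Q)
        = ∑ i : Fin d, (f i * g i) * (P * Q * A) := by
      intro A P Q f g
      rw [show A * (P * (∑ j : Fin d, f j * g j) * Q)
          = (∑ j : Fin d, f j * g j) * (P * Q * A) by ring, Finset.sum_mul]
    rw [gen]
    refine Finset.sum_congr rfl fun i _ => ?_
    rw [hprod i]
    ring
  -- merged exponent
  have hl2 : (0:ℝ) < (1 + lam)/2 := by positivity
  have emerge : ∀ t : ℝ, Real.exp (-(c/2) * (‖Δ‖ * t) ^ 2) * Real.exp (-t ^ 2 / 2)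
      = Real.exp (-((1 + lam)/2) * t ^ 2) := by
    intro t
    rw [← Real.exp_add]
    congr 1
    rw [hlam]
    ring
  have int_sq : ∀ {a : ℝ}, 0 < a → Integrable fun t : ℝ => t ^ 2 * Real.exp (-a * t ^ 2) := by
    intro a ha
    have h2 := integrable_rpow_mul_exp_neg_mul_sq ha (s := 2) (by norm_num)
    have e : ∀ t : ℝ, t ^ (2:ℝ) = t ^ 2 := fun t => by
      rw [show (2:ℝ) = ((2:ℕ):ℝ) by norm_num, Real.rpow_natCast]
    simpa [e] using h2
  have hint : ∀ i j : Fin d, Integrable (fun t : ℝ => h i j t) := by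
    intro i j
    by_cases hj0 : j = 0
    · by_cases hji : j = i
      · have heq : (fun t : ℝ => h i j t)
            = fun t : ℝ => ‖Δ‖ * (t ^ 2 * Real.exp (-((1 + lam)/2) * t ^ 2)) := by
          funext t
          subst hj0
          subst hji
          simp only [hdef, if_true]
          rw [← emerge t]
          ring
        rw [heq]
        exact (int_sq hl2).const_mul _
      · have heq : (fun t : ℝ => h i j t)
            = fun t : ℝ => ‖Δ‖ * (t * Real.exp (-((1 + lam)/2) * t ^ 2)) := by
          funext t
          subst hj0
          simp only [hdef, if_true]
          rw [if_neg hji, one_mul, ← emerge t]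
          ring
        rw [heq]
        exact (integrable_mul_exp_neg_mul_sq hl2).const_mul _
    · by_cases hji : j = i
      · have heq : (fun t : ℝ => h i j t)
            = fun t : ℝ => t * Real.exp (-(1/2 : ℝ) * t ^ 2) := by
          funext t
          subst hji
          simp only [hdef, if_true]
          rw [if_neg hj0, one_mul]
          congr 1
          ring
        rw [heq]
        exact integrable_mul_exp_neg_mul_sq (by norm_num)
      · have heq : (fun t : ℝ => h i j t)
            = fun t : ℝ => Real.exp (-(1/2 : ℝ) * t ^ 2) := by
          funext t
          simp only [hdef]
          rw [if_neg hj0, if_neg hji, one_mul, one_mul]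
          congr 1
          ring
        rw [heq]
        exact integrable_exp_neg_mul_sq (by norm_num)
  -- change of variables
  have hchange : (∫ x : EuclideanSpace ℝ (Fin d),
        ∑ i : Fin d, w i * ∏ j : Fin d, h i j (b.repr x j))
      = ∫ z : Fin d → ℝ, ∑ i : Fin d, w i * ∏ j : Fin d, h i j (z j) := by
    have hmp := (EuclideanSpace.volume_preserving_symm_measurableEquiv_toLp (Fin d)).comp
      b.measurePreserving_measurableEquiv
    have hemb := (MeasurableEquiv.measurableEmbedding
        (MeasurableEquiv.toLp 2 (Fin d → ℝ)).symm).comp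
      (MeasurableEquiv.measurableEmbedding b.measurableEquiv)
    exact hmp.integral_comp hemb (fun z : Fin d → ℝ => ∑ i : Fin d, w i * ∏ j : Fin d, h i j (z j))
  -- factorize
  have hfact : (∫ z : Fin d → ℝ, ∑ i : Fin d, w i * ∏ j : Fin d, h i j (z j))
      = ∑ i : Fin d, w i * ∏ j : Fin d, (∫ t : ℝ, h i j t) := by
    rw [integral_finset_sum (μ := volume) Finset.univ (fun i _ =>
      (Integrable.fintype_prod (f := fun j (t:ℝ) => h i j t) (fun j => hint i j)).const_mul
        (w i))]
    refine Finset.sum_congr rfl fun i _ => ?_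
    rw [MeasureTheory.integral_const_mul, volume_pi,
      integral_fintype_prod_eq_prod (fun j (t:ℝ) => h i j t)]
  -- factor values
  have hval00 : (∫ t : ℝ, h 0 0 t)
      = ‖Δ‖ * (Real.sqrt (π / ((1 + lam)/2)) / (2 * ((1 + lam)/2))) := by
    have heq : (fun t : ℝ => h 0 0 t)
        = fun t : ℝ => ‖Δ‖ * (t ^ 2 * Real.exp (-((1 + lam)/2) * t ^ 2)) := by
      funext t
      simp only [hdef, if_true]
      rw [← emerge t]
      ring
    rw [heq, MeasureTheory.integral_const_mul, gauss_sq hl2]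
  have hval0j : ∀ j : Fin d, j ≠ 0 → (∫ t : ℝ, h 0 j t) = Real.sqrt (2 * π) := by
    intro j hj
    have heq : (fun t : ℝ => h 0 j t) = fun t : ℝ => Real.exp (-(1/2 : ℝ) * t ^ 2) := by
      funext t
      simp only [hdef]
      rw [if_neg hj, if_neg hj, one_mul, one_mul]
      congr 1
      ring
    rw [heq, integral_gaussian]
    congr 1
    rw [div_div_eq_mul_div, div_one, mul_comm]
  have hvalii : ∀ i : Fin d, i ≠ 0 → (∫ t : ℝ, h i i t) = 0 := by
    intro i hi
    have heq : (fun t : ℝ => h i i t) = fun t : ℝ => t * Real.exp (-(1/2 : ℝ) * t ^ 2) := by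
      funext t
      simp only [hdef, if_true]
      rw [if_neg hi, one_mul]
      congr 1
      ring
    rw [heq, gauss_lin]
  set V : ℝ := (‖Δ‖ * (Real.sqrt (π / ((1 + lam)/2)) / (2 * ((1 + lam)/2)))) *
      Real.sqrt (2 * π) ^ (d - 1) with hVdef
  have hprod0 : (∏ j : Fin d, (∫ t : ℝ, h 0 j t)) = V := by
    rw [← Finset.mul_prod_erase Finset.univ _ (Finset.mem_univ (0 : Fin d)), hval00, hVdef]
    congr 1
    rw [Finset.prod_congr rfl (fun j hj => hval0j j (Finset.ne_of_mem_erase hj)),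
      Finset.prod_const, Finset.card_erase_of_mem (Finset.mem_univ _), Finset.card_univ,
      Fintype.card_fin]
  have hsum : (∑ i : Fin d, w i * ∏ j : Fin d, (∫ t : ℝ, h i j t)) = w 0 * V := by
    rw [Finset.sum_eq_single 0 (fun i _ hi => by
        rw [Finset.prod_eq_zero (Finset.mem_univ i) (hvalii i hi), mul_zero])
      (fun habs => absurd (Finset.mem_univ _) habs), hprod0]
  have hKval : (∫ x : EuclideanSpace ℝ (Fin d),
      Real.exp (-‖x‖ ^ 2 / 2) * (⟪Δ, x⟫ * ⟪x, v⟫ * Real.exp (-(c/2) * ⟪Δ, x⟫ ^ 2)))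
      = w 0 * V := by
    rw [integral_congr_ae (Filter.Eventually.of_forall hpt), hchange, hfact, hsum]
  rw [hKval]
  have hV : 0 ≤ V := by rw [hVdef]; positivity
  have hw0 : |w 0| ≤ 1 := by
    have hwn : ‖w‖ = 1 := by rw [hw, LinearIsometryEquiv.norm_map]; exact hv
    exact wzero_le_one w hwn
  have hVeq : V = ‖Δ‖ * Real.sqrt (2 * π) ^ d / (1 + lam) ^ ((3:ℝ)/2) := by
    have hs1 : Real.sqrt (π / ((1 + lam)/2)) = Real.sqrt (2*π) / Real.sqrt (1 + lam) := by
      rw [show π / ((1 + lam)/2) = (2*π)/(1 + lam) by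
        rw [div_div_eq_mul_div, mul_comm]]
      exact Real.sqrt_div (by positivity) _
    have hr32 : (1 + lam) ^ ((3:ℝ)/2) = (1 + lam) * Real.sqrt (1 + lam) := by
      rw [show (3:ℝ)/2 = 1 + 1/2 by norm_num, Real.rpow_add h1lam, Real.rpow_one,
        ← Real.sqrt_eq_rpow]
    have hpows : Real.sqrt (2*π) ^ d = Real.sqrt (2*π) ^ (d-1) * Real.sqrt (2*π) := by
      conv_lhs => rw [show d = (d-1)+1 from by omega]
      rw [pow_succ]
    have hsln : Real.sqrt (1 + lam) ≠ 0 := ne_of_gt (Real.sqrt_pos.mpr h1lam)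
    rw [hVdef, hs1, hr32, hpows]
    field_simp
  calc |w 0 * V| = |w 0| * V := by rw [abs_mul, abs_of_nonneg hV]
    _ ≤ 1 * V := mul_le_mul_of_nonneg_right hw0 hV
    _ = V := one_mul V
    _ = ‖Δ‖ * Real.sqrt (2 * π) ^ d / (1 + lam) ^ ((3:ℝ)/2) := hVeq

/-- Bound on the good-point contribution to the gradient in the LWLC analysis for robust
least squares regression: for independent `ε ∼ N(0, 1/β*)` (real) and `x ∼ N(0, I_d)`,
`β‖Δ‖² ≤ κ²` and a unit vector `v`,
`|E[√(β/2π)·exp(−(β/2)(ε−⟨Δ,x⟩)²)·ε·⟨x,v⟩]| ≤ √(κ²/2π)·(β/(β+β*))·(1/g̃)` where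
`g̃ = √((β+β*)/β*)·(1 + (ββ*/(β+β*))‖Δ‖²)^{3/2}`. -/
theorem stmt18
    {d : ℕ} (hd : 1 ≤ d) (β βs κ : ℝ) (hβ : 0 < β) (hβs : 0 < βs) (hκ : 0 < κ)
    (Δ : EuclideanSpace ℝ (Fin d)) (hΔ : β * ‖Δ‖ ^ 2 ≤ κ ^ 2)
    (v : EuclideanSpace ℝ (Fin d)) (hv : ‖v‖ = 1) :
    |(2 * π) ^ (-(d : ℝ) / 2) *
      ∫ x : EuclideanSpace ℝ (Fin d),
        (Real.exp (-‖x‖ ^ 2 / 2) * (Real.sqrt (βs / (2 * π)) *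
          ∫ ε : ℝ, Real.sqrt (β / (2 * π)) *
            Real.exp (-(β / 2) * (ε - ⟪Δ, x⟫) ^ 2) * ε * ⟪x, v⟫ *
            Real.exp (-βs * ε ^ 2 / 2)))|
    ≤ Real.sqrt (κ ^ 2 / (2 * π)) * (β / (β + βs)) *
        (1 / (Real.sqrt ((β + βs) / βs) *
          (1 + (β * βs / (β + βs)) * ‖Δ‖ ^ 2) ^ ((3 : ℝ) / 2))) := by
  have h2π : (0:ℝ) < 2 * π := by positivity
  have hB : (0:ℝ) < β + βs := by linarith
  set c : ℝ := β * βs / (β + βs) with hc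
  have hc0 : (0:ℝ) ≤ c := by positivity
  have h1lam : (0:ℝ) < 1 + c * ‖Δ‖ ^ 2 := by positivity
  have hT : (0:ℝ) < (1 + c * ‖Δ‖ ^ 2) ^ ((3:ℝ)/2) := Real.rpow_pos_of_pos h1lam _
  -- inner integral computation
  have hinner : ∀ x : EuclideanSpace ℝ (Fin d),
      (∫ ε : ℝ, Real.sqrt (β / (2 * π)) * Real.exp (-(β / 2) * (ε - ⟪Δ, x⟫) ^ 2) * ε * ⟪x, v⟫ *
        Real.exp (-βs * ε ^ 2 / 2))
      = (Real.sqrt (β / (2 * π)) * Real.sqrt (2 * π / (β + βs)) * (β / (β + βs))) *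
        (⟪Δ, x⟫ * ⟪x, v⟫ * Real.exp (-(c/2) * ⟪Δ, x⟫ ^ 2)) := by
    intro x
    set a : ℝ := ⟪Δ, x⟫ with ha
    set ww : ℝ := ⟪x, v⟫ with hww
    have hexpid : ∀ ε : ℝ, (-(β / 2) * (ε - a) ^ 2) + (-βs * ε ^ 2 / 2)
        = (-(c/2) * a ^ 2) + (-((β + βs)/2) * (ε - β * a / (β + βs)) ^ 2) := by
      intro ε
      rw [hc]
      field_simp
      ring
    have hfun : (fun ε : ℝ => Real.sqrt (β / (2 * π)) * Real.exp (-(β / 2) * (ε - a) ^ 2) * ε *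
          ww * Real.exp (-βs * ε ^ 2 / 2))
        = fun ε : ℝ => (Real.sqrt (β / (2 * π)) * ww * Real.exp (-(c/2) * a ^ 2)) *
          (ε * Real.exp (-((β + βs)/2) * (ε - β * a / (β + βs)) ^ 2)) := by
      funext ε
      have he : Real.exp (-(β / 2) * (ε - a) ^ 2) * Real.exp (-βs * ε ^ 2 / 2)
          = Real.exp (-(c/2) * a ^ 2) *
            Real.exp (-((β + βs)/2) * (ε - β * a / (β + βs)) ^ 2) := by
        rw [← Real.exp_add, ← Real.exp_add, hexpid ε]
      linear_combination (Real.sqrt (β / (2 * π)) * ε * ww) * he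
    rw [hfun, MeasureTheory.integral_const_mul, gauss_shift hB (β * a / (β + βs))]
    ring
  have hre : ∀ x : EuclideanSpace ℝ (Fin d),
      Real.exp (-‖x‖ ^ 2 / 2) * (Real.sqrt (βs / (2 * π)) *
        ∫ ε : ℝ, Real.sqrt (β / (2 * π)) * Real.exp (-(β / 2) * (ε - ⟪Δ, x⟫) ^ 2) * ε * ⟪x, v⟫ *
          Real.exp (-βs * ε ^ 2 / 2))
      = (Real.sqrt (βs / (2 * π)) *
          (Real.sqrt (β / (2 * π)) * Real.sqrt (2 * π / (β + βs)) * (β / (β + βs)))) *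
        (Real.exp (-‖x‖ ^ 2 / 2) * (⟪Δ, x⟫ * ⟪x, v⟫ * Real.exp (-(c/2) * ⟪Δ, x⟫ ^ 2))) := by
    intro x
    rw [hinner x]
    ring
  rw [integral_congr_ae (Filter.Eventually.of_forall hre), MeasureTheory.integral_const_mul]
  set C : ℝ := Real.sqrt (βs / (2 * π)) *
    (Real.sqrt (β / (2 * π)) * Real.sqrt (2 * π / (β + βs)) * (β / (β + βs))) with hC
  have hCnn : (0:ℝ) ≤ C := by rw [hC]; positivity
  have hppos : (0:ℝ) < (2 * π) ^ (-(d:ℝ)/2) := Real.rpow_pos_of_pos h2π _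
  rw [abs_mul, abs_mul, abs_of_pos hppos, abs_of_nonneg hCnn]
  have hK := outer_key hd hc0 Δ v hv
  have hcancel : (2 * π) ^ (-(d:ℝ)/2) * Real.sqrt (2 * π) ^ d = 1 := by
    rw [Real.sqrt_eq_rpow, ← Real.rpow_natCast ((2 * π) ^ ((1:ℝ)/2)) d,
      ← Real.rpow_mul h2π.le, ← Real.rpow_add h2π,
      show -(d:ℝ)/2 + 1/2 * (d:ℝ) = 0 by ring, Real.rpow_zero]
  calc (2 * π) ^ (-(d:ℝ)/2) * (C * |∫ x : EuclideanSpace ℝ (Fin d),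
        Real.exp (-‖x‖ ^ 2 / 2) * (⟪Δ, x⟫ * ⟪x, v⟫ * Real.exp (-(c/2) * ⟪Δ, x⟫ ^ 2))|)
      ≤ (2 * π) ^ (-(d:ℝ)/2) *
        (C * (‖Δ‖ * Real.sqrt (2 * π) ^ d / (1 + c * ‖Δ‖ ^ 2) ^ ((3:ℝ)/2))) := by
        exact mul_le_mul_of_nonneg_left (mul_le_mul_of_nonneg_left hK hCnn) hppos.le
    _ = C * ‖Δ‖ / (1 + c * ‖Δ‖ ^ 2) ^ ((3:ℝ)/2) := by
        rw [show (2 * π) ^ (-(d:ℝ)/2) *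
            (C * (‖Δ‖ * Real.sqrt (2 * π) ^ d / (1 + c * ‖Δ‖ ^ 2) ^ ((3:ℝ)/2)))
            = ((2 * π) ^ (-(d:ℝ)/2) * Real.sqrt (2 * π) ^ d) *
              (C * ‖Δ‖ / (1 + c * ‖Δ‖ ^ 2) ^ ((3:ℝ)/2)) by ring, hcancel, one_mul]
    _ ≤ Real.sqrt (κ ^ 2 / (2 * π)) * (β / (β + βs)) *
        (1 / (Real.sqrt ((β + βs) / βs) * (1 + c * ‖Δ‖ ^ 2) ^ ((3:ℝ)/2))) := by
        -- compare squares
        have hLnn : (0:ℝ) ≤ C * ‖Δ‖ / (1 + c * ‖Δ‖ ^ 2) ^ ((3:ℝ)/2) := by positivity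
        have hRnn : (0:ℝ) ≤ Real.sqrt (κ ^ 2 / (2 * π)) * (β / (β + βs)) *
            (1 / (Real.sqrt ((β + βs) / βs) * (1 + c * ‖Δ‖ ^ 2) ^ ((3:ℝ)/2))) := by positivity
        have hT2 : ((1 + c * ‖Δ‖ ^ 2) ^ ((3:ℝ)/2)) ^ 2 = (1 + c * ‖Δ‖ ^ 2) ^ (3:ℕ) := by
          rw [← Real.rpow_natCast ((1 + c * ‖Δ‖ ^ 2) ^ ((3:ℝ)/2)) 2, ← Real.rpow_mul h1lam.le,
            show (3:ℝ)/2 * ((2:ℕ):ℝ) = ((3:ℕ):ℝ) by norm_num, Real.rpow_natCast]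
        have hsq : (C * ‖Δ‖ / (1 + c * ‖Δ‖ ^ 2) ^ ((3:ℝ)/2)) ^ 2
            ≤ (Real.sqrt (κ ^ 2 / (2 * π)) * (β / (β + βs)) *
              (1 / (Real.sqrt ((β + βs) / βs) * (1 + c * ‖Δ‖ ^ 2) ^ ((3:ℝ)/2)))) ^ 2 := by
          have e1 : (C * ‖Δ‖ / (1 + c * ‖Δ‖ ^ 2) ^ ((3:ℝ)/2)) ^ 2
              = (β * ‖Δ‖ ^ 2) *
                (βs * β ^ 2 / ((2*π) * (β + βs) ^ 3 * (1 + c * ‖Δ‖ ^ 2) ^ (3:ℕ))) := by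
            rw [div_pow, hT2, mul_pow, hC, mul_pow, mul_pow, mul_pow,
              Real.sq_sqrt (by positivity : (0:ℝ) ≤ βs / (2 * π)),
              Real.sq_sqrt (by positivity : (0:ℝ) ≤ β / (2 * π)),
              Real.sq_sqrt (by positivity : (0:ℝ) ≤ 2 * π / (β + βs))]
            field_simp
          have e2 : (Real.sqrt (κ ^ 2 / (2 * π)) * (β / (β + βs)) *
              (1 / (Real.sqrt ((β + βs) / βs) * (1 + c * ‖Δ‖ ^ 2) ^ ((3:ℝ)/2)))) ^ 2
              = κ ^ 2 *
                (βs * β ^ 2 / ((2*π) * (β + βs) ^ 3 * (1 + c * ‖Δ‖ ^ 2) ^ (3:ℕ))) := by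
            simp only [mul_pow, div_pow, one_pow, hT2,
              Real.sq_sqrt (by positivity : (0:ℝ) ≤ κ ^ 2 / (2 * π)),
              Real.sq_sqrt (by positivity : (0:ℝ) ≤ (β + βs) / βs)]
            field_simp
          rw [e1, e2]
          exact mul_le_mul_of_nonneg_right hΔ (by positivity)
        have := Real.sqrt_le_sqrt hsq
        rwa [Real.sqrt_sq hLnn, Real.sqrt_sq hRnn] at this
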